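/- Let G = (V,E) be a graph with injective vertex order π and let G* be the CCH graph of G w.r.t. π (obtained by adding an edge {v,w} whenever there exists a simple v-w-path whose internal vertices all have rank less than min{π(v),π(w)}). Then for every vertex v, the set of vertices u reachable from v in G* by a path that is strictly increasing w.r.t. π equals the set of vertices u for which there exists a simple v-u-path in G on which u has maximum rank. -/

import Mathlib

/-- The CCH graph of `G` w.r.t. the order `π`: vertices `v ≠ w` are adjacent iff
there is a simple `v`-`w`-path in `G` all of whose internal vertices have rank
smaller than `min (π v) (π w)`. (This includes all original edges of `G`.) -/
def cchGraph {V : Type*} (G : SimpleGraph V) (π : V → ℕ) : SimpleGraph V :=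
  SimpleGraph.fromRel (fun v w => ∃ p : G.Walk v w, p.IsPath ∧
    ∀ x ∈ p.support, x ≠ v → x ≠ w → π x < min (π v) (π w))

open SimpleGraph Walk

private lemma cch_aux_first_shortcut {V : Type*} (G : SimpleGraph V) (π : V → ℕ)
    (hπ : Function.Injective π) {x u : V} (p : G.Walk x u) :
    (∀ y ∈ p.support, π y ≤ π u) →
    ∀ (v : V) (q₀ : G.Walk v x), (∀ y ∈ q₀.support, y ≠ v → π y < π v) →
      π v ≤ π u → v ≠ u →
    ∃ w, π v < π w ∧
      (∃ q : G.Walk v w, ∀ y ∈ q.support, y ≠ v → y ≠ w → π y < min (π v) (π w)) ∧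
      ∃ p₂ : G.Walk w u, (∀ y ∈ p₂.support, π y ≤ π u) ∧ p₂.length < p.length := by
  induction p with
  | nil =>
    intro _ v q₀ hq₀ hvu hne
    exact absurd (hq₀ _ q₀.end_mem_support (Ne.symm hne)) (not_lt.2 hvu)
  | @cons x y u h p' ih =>
    intro hmax v q₀ hq₀ hvu hne
    have hmax' : ∀ y ∈ p'.support, π y ≤ π u := fun z hz => hmax z (by simp [hz])
    rcases lt_trichotomy (π v) (π y) with hvy | hvy | hvy
    · refine ⟨y, hvy, ⟨q₀.append (Walk.cons h Walk.nil), ?_⟩, p', hmax', by simp⟩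
      intro z hz hzv hzy
      rw [Walk.mem_support_append_iff] at hz
      have hzq : z ∈ q₀.support := by
        rcases hz with hz | hz
        · exact hz
        · simp only [Walk.support_cons, Walk.support_nil, List.mem_cons,
            List.not_mem_nil, or_false, List.mem_singleton] at hz
          rcases hz with rfl | rfl
          · exact q₀.end_mem_support
          · exact absurd rfl hzy
      exact lt_min (hq₀ z hzq hzv) ((hq₀ z hzq hzv).trans hvy)
    · -- π v = π y, so v = y
      have hv : v = y := hπ hvy
      subst hv
      obtain ⟨w, h1, h2, p₂, h3, h4⟩ :=
        ih hmax' v Walk.nil (by simp) hvu hne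
      exact ⟨w, h1, h2, p₂, h3, by simp; omega⟩
    · -- π y < π v, extend q₀
      have hcond : ∀ z ∈ (q₀.append (Walk.cons h Walk.nil)).support, z ≠ v → π z < π v := by
        intro z hz hzv
        rw [Walk.mem_support_append_iff] at hz
        rcases hz with hz | hz
        · exact hq₀ z hz hzv
        · simp only [Walk.support_cons, Walk.support_nil, List.mem_cons,
            List.not_mem_nil, or_false, List.mem_singleton] at hz
          rcases hz with rfl | rfl
          · exact hq₀ _ q₀.end_mem_support hzv
          · exact hvy
      obtain ⟨w, h1, h2, p₂, h3, h4⟩ :=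
        ih hmax' v (q₀.append (Walk.cons h Walk.nil)) hcond hvu hne
      exact ⟨w, h1, h2, p₂, h3, by simp; omega⟩

private lemma cch_aux_label_subset_ss {V : Type*} (G : SimpleGraph V) (π : V → ℕ)
    (hπ : Function.Injective π) (u : V) :
    ∀ (n : ℕ) (v : V) (p : G.Walk v u), p.length ≤ n →
      (∀ y ∈ p.support, π y ≤ π u) →
      ∃ P : (cchGraph G π).Walk v u, List.Chain' (fun a b => π a < π b) P.support := by
  classical
  intro n
  induction n with
  | zero =>
    intro v p hlen hmax
    have h0 : p.length = 0 := Nat.le_zero.mp hlen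
    have := (Walk.eq_of_length_eq_zero h0)
    subst this
    exact ⟨Walk.nil, List.isChain_singleton _⟩
  | succ n ih =>
    intro v p hlen hmax
    by_cases hvu : v = u
    · subst hvu; exact ⟨Walk.nil, List.isChain_singleton _⟩
    · obtain ⟨w, hvw, ⟨q, hq⟩, p₂, hmax₂, hlt⟩ :=
        cch_aux_first_shortcut G π hπ p hmax v Walk.nil (by simp)
          (hmax v p.start_mem_support) hvu
      have hadj : (cchGraph G π).Adj v w := by
        rw [cchGraph, SimpleGraph.fromRel_adj]
        refine ⟨fun hh => by subst hh; exact lt_irrefl _ hvw,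
          Or.inl ⟨q.bypass, q.bypass_isPath, ?_⟩⟩
        intro z hz hzv hzw
        exact hq z (q.support_bypass_subset hz) hzv hzw
      obtain ⟨P, hP⟩ := ih w p₂ (by omega) hmax₂
      refine ⟨Walk.cons hadj P, ?_⟩
      rw [Walk.support_cons]
      refine hP.cons ?_
      intro z hz
      rw [Walk.support_eq_cons P] at hz
      simp only [List.head?_cons, Option.mem_def, Option.some.injEq] at hz
      subst hz
      exact hvw

private lemma cch_aux_ss_subset_label {V : Type*} (G : SimpleGraph V) (π : V → ℕ)
    {v u : V} (P : (cchGraph G π).Walk v u) :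
      List.Chain' (fun a b => π a < π b) P.support →
      π v ≤ π u ∧ ∃ q : G.Walk v u, ∀ x ∈ q.support, π x ≤ π u := by
  induction P with
  | nil => intro _; exact ⟨le_refl _, Walk.nil, by simp⟩
  | @cons v w u h P' ih =>
    intro hc
    rw [Walk.support_cons, Walk.support_eq_cons P'] at hc
    replace hc := List.isChain_cons_cons.mp hc
    obtain ⟨hvw, hc'⟩ := hc
    rw [← Walk.support_eq_cons P'] at hc'
    obtain ⟨hwu, q', hq'⟩ := ih hc'
    have hr : ∃ r : G.Walk v w, ∀ x ∈ r.support, x ≠ v → x ≠ w → π x < min (π v) (π w) := by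
      rw [cchGraph, SimpleGraph.fromRel_adj] at h
      rcases h.2 with ⟨r, _, hrcond⟩ | ⟨r, _, hrcond⟩
      · exact ⟨r, hrcond⟩
      · refine ⟨r.reverse, ?_⟩
        intro x hx hxv hxw
        rw [Walk.support_reverse, List.mem_reverse] at hx
        rw [min_comm]
        exact hrcond x hx hxw hxv
    obtain ⟨r, hrcond⟩ := hr
    refine ⟨le_of_lt (lt_of_lt_of_le hvw hwu), r.append q', ?_⟩
    intro x hx
    rw [Walk.mem_support_append_iff] at hx
    rcases hx with hx | hx
    · by_cases hxv : x = v
      · subst hxv; exact le_of_lt (lt_of_lt_of_le hvw hwu)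
      · by_cases hxw : x = w
        · subst hxw; exact hwu
        · exact le_of_lt <| calc π x < min (π v) (π w) := hrcond x hx hxv hxw
            _ ≤ π v := min_le_left _ _
            _ ≤ π u := le_of_lt (lt_of_lt_of_le hvw hwu)
    · exact hq' x hx

/-- For every vertex `v`, the search space of `v` in the CCH graph
(vertices reachable via a strictly `π`-increasing path) equals the canonical HCuHL
label of `v` (vertices `u` such that some simple `v`-`u`-path in `G` has `u` as its
maximum-rank vertex). -/
theorem searchSpace_eq_canonical_label {V : Type*} [Fintype V] (G : SimpleGraph V)
    (π : V → ℕ) (hπ : Function.Injective π) (v : V) :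
    {u : V | ∃ p : (cchGraph G π).Walk v u,
        List.Chain' (fun a b => π a < π b) p.support} =
    {u : V | ∃ p : G.Walk v u, p.IsPath ∧ ∀ w ∈ p.support, π w ≤ π u} := by
  classical
  ext u
  simp only [Set.mem_setOf_eq]
  constructor
  · rintro ⟨P, hP⟩
    obtain ⟨_, q, hq⟩ := cch_aux_ss_subset_label G π P hP
    exact ⟨q.bypass, q.bypass_isPath, fun x hx => hq x (q.support_bypass_subset hx)⟩
  · rintro ⟨p, _, hmax⟩
    exact cch_aux_label_subset_ss G π hπ u p.length v p le_rfl hmax
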